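/- Let H₁, H₂, K₁, K₂ be finite-dimensional Hilbert spaces, 𝒰₁ ⊆ H₁ ⊗ overline{K₁} and 𝒰₂ ⊆ overline{H₂} ⊗ K₂ subspaces, and ζ ∈ H₁ ⊗ overline{K₁} ⊗ overline{H₂} ⊗ K₂. Then the following are equivalent: (a) L_{ū₁}(ζ) ∈ 𝒰₂ for all u₁ ∈ 𝒰₁ and L_{ū₂}(ζ) ∈ 𝒰₁ for all u₂ ∈ 𝒰₂; (b) ζ ∈ (𝒰₁ ⊗ 𝒰₂) + (𝒰₁^⊥ ⊗ 𝒰₂^⊥). -/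

import Mathlib

open scoped TensorProduct

/-- The slice map `L_{ū₁} : V ⊗ W → W`, `v ⊗ w ↦ ⟨v, u₁⟩ w`. -/
noncomputable def sliceL {V W : Type*} [NormedAddCommGroup V] [InnerProductSpace ℂ V]
    [NormedAddCommGroup W] [InnerProductSpace ℂ W] (u : V) :
    TensorProduct ℂ V W →ₗ[ℂ] W :=
  TensorProduct.lift
    { toFun := fun v => (inner ℂ u v : ℂ) • (LinearMap.id : W →ₗ[ℂ] W)
      map_add' := by intros; simp [inner_add_right, add_smul]
      map_smul' := by intros; simp [inner_smul_right, smul_smul] }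

/-- The slice map `L_{ū₂} : V ⊗ W → V`, `v ⊗ w ↦ ⟨w, u₂⟩ v`. -/
noncomputable def sliceR {V W : Type*} [NormedAddCommGroup V] [InnerProductSpace ℂ V]
    [NormedAddCommGroup W] [InnerProductSpace ℂ W] (u : W) :
    TensorProduct ℂ V W →ₗ[ℂ] V :=
  (sliceL u).comp (TensorProduct.comm ℂ V W).toLinearMap

section Aux

variable {V W : Type*} [NormedAddCommGroup V] [InnerProductSpace ℂ V]
    [NormedAddCommGroup W] [InnerProductSpace ℂ W]

@[simp] lemma sliceL_tmul (u v : V) (w : W) :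
    sliceL u (v ⊗ₜ[ℂ] w) = (inner ℂ u v : ℂ) • w := rfl

@[simp] lemma sliceR_tmul (u : W) (v : V) (w : W) :
    sliceR u (v ⊗ₜ[ℂ] w) = (inner ℂ u w : ℂ) • v := rfl

lemma exists_repr [FiniteDimensional ℂ V] (η : TensorProduct ℂ V W) :
    ∃ f : Fin (Module.finrank ℂ V) → W,
      η = ∑ i, (stdOrthonormalBasis ℂ V) i ⊗ₜ[ℂ] f i := by
  classical
  set b := stdOrthonormalBasis ℂ V with hb
  induction η using TensorProduct.induction_on with
  | zero => exact ⟨0, by simp⟩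
  | tmul v w =>
      refine ⟨fun i => b.repr v i • w, ?_⟩
      calc v ⊗ₜ[ℂ] w = (∑ i, b.repr v i • b i) ⊗ₜ[ℂ] w := by rw [b.sum_repr v]
      _ = ∑ i, b i ⊗ₜ[ℂ] (b.repr v i • w) := by
          rw [TensorProduct.sum_tmul]
          exact Finset.sum_congr rfl fun i _ => by
            rw [TensorProduct.smul_tmul, TensorProduct.tmul_smul]
  | add x y hx hy =>
      obtain ⟨f, rfl⟩ := hx
      obtain ⟨g, rfl⟩ := hy
      exact ⟨f + g, by simp [TensorProduct.tmul_add, Finset.sum_add_distrib]⟩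
lemma eq_zero_of_sliceL [FiniteDimensional ℂ V] (η : TensorProduct ℂ V W)
    (h : ∀ u : V, sliceL u η = 0) : η = 0 := by
  classical
  set b := stdOrthonormalBasis ℂ V with hb
  obtain ⟨f, rfl⟩ := exists_repr η
  have hf : ∀ j, f j = 0 := by
    intro j
    have hj := h (b j)
    rw [map_sum] at hj
    have horth := orthonormal_iff_ite.mp b.orthonormal
    simpa [← hb, sliceL_tmul, horth, Finset.sum_ite_eq] using hj
  simp [hf]

lemma eq_zero_of_sliceR [FiniteDimensional ℂ W] (η : TensorProduct ℂ V W)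
    (h : ∀ u : W, sliceR u η = 0) : η = 0 := by
  have : (TensorProduct.comm ℂ V W) η = 0 :=
    eq_zero_of_sliceL _ fun u => h u
  simpa using congrArg (TensorProduct.comm ℂ V W).symm this

lemma sliceL_map (u : V) (A : V →ₗ[ℂ] V) (B : W →ₗ[ℂ] W)
    (hA : ∀ x y : V, (inner ℂ (A x) y : ℂ) = inner ℂ x (A y)) (η : TensorProduct ℂ V W) :
    sliceL u (TensorProduct.map A B η) = B (sliceL (A u) η) := by
  induction η using TensorProduct.induction_on with
  | zero => simp
  | tmul v w => simp [TensorProduct.map_tmul, (hA u v).symm]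
  | add x y hx hy => simp [hx, hy]

lemma sliceR_map (u : W) (A : V →ₗ[ℂ] V) (B : W →ₗ[ℂ] W)
    (hB : ∀ x y : W, (inner ℂ (B x) y : ℂ) = inner ℂ x (B y)) (η : TensorProduct ℂ V W) :
    sliceR u (TensorProduct.map A B η) = A (sliceR (B u) η) := by
  induction η using TensorProduct.induction_on with
  | zero => simp
  | tmul v w => simp [TensorProduct.map_tmul, (hB u w).symm]
  | add x y hx hy => simp [hx, hy]

end Aux

/-- `L_{ū₁}(ζ) ∈ 𝒰₂` for all `u₁ ∈ 𝒰₁` and `L_{ū₂}(ζ) ∈ 𝒰₁` for all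
`u₂ ∈ 𝒰₂` iff `ζ ∈ (𝒰₁ ⊗ 𝒰₂) + (𝒰₁^⊥ ⊗ 𝒰₂^⊥)`. -/
theorem stmt9 {V W : Type*} [NormedAddCommGroup V] [InnerProductSpace ℂ V]
    [FiniteDimensional ℂ V] [NormedAddCommGroup W] [InnerProductSpace ℂ W]
    [FiniteDimensional ℂ W]
    (U₁ : Submodule ℂ V) (U₂ : Submodule ℂ W) (ζ : TensorProduct ℂ V W) :
    ((∀ u₁ ∈ U₁, sliceL u₁ ζ ∈ U₂) ∧ (∀ u₂ ∈ U₂, sliceR u₂ ζ ∈ U₁)) ↔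
      ζ ∈ LinearMap.range (TensorProduct.map U₁.subtype U₂.subtype) ⊔
            LinearMap.range (TensorProduct.map U₁ᗮ.subtype U₂ᗮ.subtype) := by
  classical
  set p₁ : V →ₗ[ℂ] V := U₁.subtype ∘ₗ (Submodule.orthogonalProjectionOnto U₁ : V →L[ℂ] U₁).toLinearMap
    with hp₁
  set p₁' : V →ₗ[ℂ] V := U₁ᗮ.subtype ∘ₗ (Submodule.orthogonalProjectionOnto U₁ᗮ : V →L[ℂ] U₁ᗮ).toLinearMap
    with hp₁'
  set p₂ : W →ₗ[ℂ] W := U₂.subtype ∘ₗ (Submodule.orthogonalProjectionOnto U₂ : W →L[ℂ] U₂).toLinearMap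
    with hp₂
  set p₂' : W →ₗ[ℂ] W := U₂ᗮ.subtype ∘ₗ (Submodule.orthogonalProjectionOnto U₂ᗮ : W →L[ℂ] U₂ᗮ).toLinearMap
    with hp₂'
  have hsym₁ : ∀ x y : V, (inner ℂ (p₁ x) y : ℂ) = inner ℂ x (p₁ y) := fun x y =>
    Submodule.inner_starProjection_left_eq_right U₁ x y
  have hsym₂' : ∀ x y : W, (inner ℂ (p₂' x) y : ℂ) = inner ℂ x (p₂' y) := fun x y =>
    Submodule.inner_starProjection_left_eq_right U₂ᗮ x y
  have hsym₂ : ∀ x y : W, (inner ℂ (p₂ x) y : ℂ) = inner ℂ x (p₂ y) := fun x y =>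
    Submodule.inner_starProjection_left_eq_right U₂ x y
  constructor
  · rintro ⟨h₁, h₂⟩
    have hz12 : TensorProduct.map p₁ p₂' ζ = 0 := by
      apply eq_zero_of_sliceL
      intro u
      rw [sliceL_map u p₁ p₂' hsym₁ ζ]
      have hmem : sliceL (p₁ u) ζ ∈ U₂ :=
        h₁ _ (Submodule.orthogonalProjectionOnto U₁ u).2
      have : Submodule.orthogonalProjectionOnto U₂ᗮ (sliceL (p₁ u) ζ) = 0 :=
        Submodule.orthogonalProjectionOnto_apply_of_mem_orthogonal
          (U₂.le_orthogonal_orthogonal hmem)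
      simp [hp₂', this]
    have hz21 : TensorProduct.map p₁' p₂ ζ = 0 := by
      apply eq_zero_of_sliceR
      intro u
      rw [sliceR_map u p₁' p₂ hsym₂ ζ]
      have hmem : sliceR (p₂ u) ζ ∈ U₁ :=
        h₂ _ (Submodule.orthogonalProjectionOnto U₂ u).2
      have : Submodule.orthogonalProjectionOnto U₁ᗮ (sliceR (p₂ u) ζ) = 0 :=
        Submodule.orthogonalProjectionOnto_apply_of_mem_orthogonal
          (U₁.le_orthogonal_orthogonal hmem)
      simp [hp₁', this]
    have hsum₁ : p₁ + p₁' = LinearMap.id := by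
      ext v
      exact Submodule.starProjection_add_starProjection_orthogonal (K := U₁) v
    have hsum₂ : p₂ + p₂' = LinearMap.id := by
      ext w
      exact Submodule.starProjection_add_starProjection_orthogonal (K := U₂) w
    have hζ : ζ = TensorProduct.map p₁ p₂ ζ + TensorProduct.map p₁' p₂' ζ := by
      have hid : TensorProduct.map (p₁ + p₁') (p₂ + p₂') ζ = ζ := by
        rw [hsum₁, hsum₂, TensorProduct.map_id]; rfl
      rw [TensorProduct.map_add_left, TensorProduct.map_add_right,
        TensorProduct.map_add_right] at hid
      have := hid
      simp only [LinearMap.add_apply, hz12, hz21, add_zero, zero_add] at this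
      linear_combination (norm := abel) this.symm
    rw [hζ]
    refine Submodule.add_mem _ (Submodule.mem_sup_left ?_) (Submodule.mem_sup_right ?_)
    · refine ⟨TensorProduct.map (Submodule.orthogonalProjectionOnto U₁ : V →L[ℂ] U₁).toLinearMap
        (Submodule.orthogonalProjectionOnto U₂ : W →L[ℂ] U₂).toLinearMap ζ, ?_⟩
      rw [← LinearMap.comp_apply, ← TensorProduct.map_comp]
    · refine ⟨TensorProduct.map (Submodule.orthogonalProjectionOnto U₁ᗮ : V →L[ℂ] U₁ᗮ).toLinearMap
        (Submodule.orthogonalProjectionOnto U₂ᗮ : W →L[ℂ] U₂ᗮ).toLinearMap ζ, ?_⟩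
      rw [← LinearMap.comp_apply, ← TensorProduct.map_comp]
  · intro h
    obtain ⟨x, hx, y, hy, rfl⟩ := Submodule.mem_sup.mp h
    obtain ⟨a, rfl⟩ := hx
    obtain ⟨b, rfl⟩ := hy
    clear h
    constructor
    · intro u₁ hu₁
      rw [map_add]
      refine Submodule.add_mem _ ?_ ?_
      · induction a using TensorProduct.induction_on with
        | zero => simp
        | tmul v w => exact (by simpa using U₂.smul_mem (inner ℂ u₁ (v : V)) w.2)
        | add s t hs ht => rw [map_add, map_add]; exact Submodule.add_mem _ hs ht
      · have hzero : sliceL u₁ (TensorProduct.map U₁ᗮ.subtype U₂ᗮ.subtype b) = 0 := by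
          induction b using TensorProduct.induction_on with
          | zero => simp
          | tmul v w =>
              have : (inner ℂ u₁ (v : V) : ℂ) = 0 :=
                (Submodule.mem_orthogonal U₁ (v : V)).mp v.2 u₁ hu₁
              simp [this]
          | add s t hs ht => rw [map_add, map_add, hs, ht, add_zero]
        rw [hzero]; exact Submodule.zero_mem _
    · intro u₂ hu₂
      rw [map_add]
      refine Submodule.add_mem _ ?_ ?_
      · induction a using TensorProduct.induction_on with
        | zero => simp
        | tmul v w => exact (by simpa using U₁.smul_mem (inner ℂ u₂ (w : W)) v.2)
        | add s t hs ht => rw [map_add, map_add]; exact Submodule.add_mem _ hs ht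
      · have hzero : sliceR u₂ (TensorProduct.map U₁ᗮ.subtype U₂ᗮ.subtype b) = 0 := by
          induction b using TensorProduct.induction_on with
          | zero => simp
          | tmul v w =>
              have : (inner ℂ u₂ (w : W) : ℂ) = 0 :=
                (Submodule.mem_orthogonal U₂ (w : W)).mp w.2 u₂ hu₂
              simp [this]
          | add s t hs ht => rw [map_add, map_add, hs, ht, add_zero]
        rw [hzero]; exact Submodule.zero_mem _
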